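/- Let L > 0 and let θ : [0,L] → ℝ be continuous and not constant on [0,L]. Then det Π(θ) > 0; in particular the matrix Π(θ) is invertible. -/

import Mathlib

open Set Real intervalIntegral

/-- If `a sin y - b cos y` vanishes on a nondegenerate interval, then `a = b = 0`. -/
lemma aux_lin_zero (a b : ℝ) {m M : ℝ} (hmM : m < M)
    (hz : ∀ y ∈ Set.Icc m M, a * Real.sin y - b * Real.cos y = 0) : a = 0 ∧ b = 0 := by
  set x := (m + M) / 2 with hx
  have hxIoo : x ∈ Set.Ioo m M := ⟨by simp [hx]; linarith, by simp [hx]; linarith⟩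
  have hmem : Set.Ioo m M ∈ nhds x := (isOpen_Ioo).mem_nhds hxIoo
  have heq : (fun y => a * Real.sin y - b * Real.cos y) =ᶠ[nhds x] fun _ => (0:ℝ) := by
    filter_upwards [hmem] with y hy
    exact hz y (Set.Ioo_subset_Icc_self hy)
  have hderiv : HasDerivAt (fun y => a * Real.sin y - b * Real.cos y)
      (a * Real.cos x + b * Real.sin x) x := by
    have h1 : HasDerivAt (fun y => a * Real.sin y) (a * Real.cos x) x :=
      (Real.hasDerivAt_sin x).const_mul a
    have h2 : HasDerivAt (fun y => b * Real.cos y) (b * (-Real.sin x)) x :=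
      (Real.hasDerivAt_cos x).const_mul b
    have := h1.sub h2
    exact this.congr_deriv (by ring)
  have hderiv0 : HasDerivAt (fun y => a * Real.sin y - b * Real.cos y) 0 x := by
    have : HasDerivAt (fun _ : ℝ => (0:ℝ)) 0 x := hasDerivAt_const x 0
    exact this.congr_of_eventuallyEq heq
  have hd : a * Real.cos x + b * Real.sin x = 0 := by
    have := hderiv.unique hderiv0
    linarith
  have hv : a * Real.sin x - b * Real.cos x = 0 :=
    hz x (Set.Ioo_subset_Icc_self hxIoo)
  have hpyth := Real.sin_sq_add_cos_sq x
  constructor <;> nlinarith [sq_nonneg (a * Real.sin x - b * Real.cos x),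
    sq_nonneg (a * Real.cos x + b * Real.sin x), sq_nonneg a, sq_nonneg b]

/-- A nonnegative function, continuous on `[0,L]` and positive at a point of `[0,L]`,
has positive integral. -/
lemma aux_integral_pos {L : ℝ} (hL : 0 < L) {f : ℝ → ℝ}
    (hf : ContinuousOn f (Set.Icc 0 L)) (hnn : ∀ s, 0 ≤ f s)
    {s₀ : ℝ} (hs₀ : s₀ ∈ Set.Icc 0 L) (hpos : 0 < f s₀) :
    0 < ∫ s in (0:ℝ)..L, f s := by
  -- find δ such that f > f s₀ / 2 on Icc 0 L ∩ ball s₀ δ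
  have hcw : ContinuousWithinAt f (Set.Icc 0 L) s₀ := hf s₀ hs₀
  have hev : ∀ᶠ y in nhdsWithin s₀ (Set.Icc 0 L), f s₀ / 2 < f y :=
    hcw.eventually_const_lt (by linarith)
  rw [eventually_nhdsWithin_iff] at hev
  obtain ⟨δ, hδ, hball⟩ := Metric.eventually_nhds_iff_ball.mp hev
  set u := max 0 (s₀ - δ / 2) with hu
  set v := min L (s₀ + δ / 2) with hv
  have huv : u < v := by
    rw [hu, hv]
    apply max_lt <;> apply lt_min <;> linarith [hs₀.1, hs₀.2, hδ]
  have hu0 : 0 ≤ u := le_max_left _ _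
  have hvL : v ≤ L := min_le_left _ _
  have huL : u ≤ L := le_trans (le_of_lt huv) hvL
  have h0v : 0 ≤ v := le_trans hu0 (le_of_lt huv)
  have hint : IntervalIntegrable f MeasureTheory.volume 0 L :=
    hf.intervalIntegrable_of_Icc hL.le
  have hmemu : u ∈ Set.uIcc (0:ℝ) L := by
    rw [Set.uIcc_of_le hL.le]; exact ⟨hu0, huL⟩
  have hmemv : v ∈ Set.uIcc (0:ℝ) L := by
    rw [Set.uIcc_of_le hL.le]; exact ⟨h0v, hvL⟩
  have hmem0 : (0:ℝ) ∈ Set.uIcc (0:ℝ) L := Set.left_mem_uIcc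
  have hmemL : L ∈ Set.uIcc (0:ℝ) L := Set.right_mem_uIcc
  have hint1 : IntervalIntegrable f MeasureTheory.volume 0 u :=
    hint.mono_set (Set.uIcc_subset_uIcc hmem0 hmemu)
  have hint2 : IntervalIntegrable f MeasureTheory.volume u v :=
    hint.mono_set (Set.uIcc_subset_uIcc hmemu hmemv)
  have hint3 : IntervalIntegrable f MeasureTheory.volume v L :=
    hint.mono_set (Set.uIcc_subset_uIcc hmemv hmemL)
  have hposuv : 0 < ∫ s in u..v, f s := by
    apply intervalIntegral_pos_of_pos_on hint2 _ huv
    intro x hx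
    have hx1 : x ∈ Set.Icc 0 L := ⟨le_trans hu0 hx.1.le, le_trans hx.2.le hvL⟩
    have hx2 : dist x s₀ < δ := by
      rw [Real.dist_eq, abs_lt]
      constructor
      · have : s₀ - δ / 2 ≤ u := le_max_right _ _
        linarith [hx.1]
      · have : v ≤ s₀ + δ / 2 := min_le_right _ _
        linarith [hx.2]
    have := hball x hx2 hx1
    linarith
  have e1 : (0:ℝ) ≤ ∫ s in (0:ℝ)..u, f s :=
    intervalIntegral.integral_nonneg hu0 (fun x _ => hnn x)
  have e3 : (0:ℝ) ≤ ∫ s in v..L, f s :=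
    intervalIntegral.integral_nonneg hvL (fun x _ => hnn x)
  have hsplit : ∫ s in (0:ℝ)..L, f s =
      (∫ s in (0:ℝ)..u, f s) + (∫ s in u..v, f s) + (∫ s in v..L, f s) := by
    rw [intervalIntegral.integral_add_adjacent_intervals hint1 hint2,
      intervalIntegral.integral_add_adjacent_intervals (hint1.trans hint2) hint3]
  rw [hsplit]
  linarith

noncomputable def PiMat (L : ℝ) (θ : ℝ → ℝ) : Matrix (Fin 2) (Fin 2) ℝ :=
  !![∫ s in (0:ℝ)..L, Real.sin (θ s) ^ 2, -(∫ s in (0:ℝ)..L, Real.sin (θ s) * Real.cos (θ s));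
     -(∫ s in (0:ℝ)..L, Real.sin (θ s) * Real.cos (θ s)), ∫ s in (0:ℝ)..L, Real.cos (θ s) ^ 2]

/-- if `θ` is continuous and not constant on `[0,L]`, then `det Π(θ) > 0`
and `Π(θ)` is invertible. -/
theorem det_Pi_pos_of_not_constant (L : ℝ) (hL : 0 < L) (θ : ℝ → ℝ)
    (hθ : ContinuousOn θ (Set.Icc 0 L))
    (hnc : ∃ s₁ ∈ Set.Icc (0:ℝ) L, ∃ s₂ ∈ Set.Icc (0:ℝ) L, θ s₁ ≠ θ s₂) :
    0 < (PiMat L θ).det ∧ IsUnit (PiMat L θ) := by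
  obtain ⟨s₁, hs₁, s₂, hs₂, hne⟩ := hnc
  set A := ∫ s in (0:ℝ)..L, Real.sin (θ s) ^ 2 with hA
  set C := ∫ s in (0:ℝ)..L, Real.cos (θ s) ^ 2 with hC
  set J := ∫ s in (0:ℝ)..L, Real.sin (θ s) * Real.cos (θ s) with hJ
  -- continuity of components
  have hsin : ContinuousOn (fun s => Real.sin (θ s)) (Set.Icc 0 L) :=
    Real.continuous_sin.comp_continuousOn hθ
  have hcos : ContinuousOn (fun s => Real.cos (θ s)) (Set.Icc 0 L) :=
    Real.continuous_cos.comp_continuousOn hθ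
  have hisin2 : IntervalIntegrable (fun s => Real.sin (θ s) ^ 2)
      MeasureTheory.volume 0 L := ((hsin.pow 2)).intervalIntegrable_of_Icc hL.le
  have hicos2 : IntervalIntegrable (fun s => Real.cos (θ s) ^ 2)
      MeasureTheory.volume 0 L := ((hcos.pow 2)).intervalIntegrable_of_Icc hL.le
  have hisc : IntervalIntegrable (fun s => Real.sin (θ s) * Real.cos (θ s))
      MeasureTheory.volume 0 L := (hsin.mul hcos).intervalIntegrable_of_Icc hL.le
  -- the quadratic form
  have hQ : ∀ a b : ℝ,
      (∫ s in (0:ℝ)..L, (a * Real.sin (θ s) - b * Real.cos (θ s)) ^ 2) =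
        a ^ 2 * A - 2 * a * b * J + b ^ 2 * C := by
    intro a b
    have hexp : ∀ s : ℝ, (a * Real.sin (θ s) - b * Real.cos (θ s)) ^ 2 =
        a ^ 2 * Real.sin (θ s) ^ 2 - (2 * a * b) * (Real.sin (θ s) * Real.cos (θ s))
          + b ^ 2 * Real.cos (θ s) ^ 2 := by intro s; ring
    calc (∫ s in (0:ℝ)..L, (a * Real.sin (θ s) - b * Real.cos (θ s)) ^ 2)
        = ∫ s in (0:ℝ)..L, (a ^ 2 * Real.sin (θ s) ^ 2
            - (2 * a * b) * (Real.sin (θ s) * Real.cos (θ s))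
            + b ^ 2 * Real.cos (θ s) ^ 2) := by
          exact intervalIntegral.integral_congr (fun s _ => hexp s)
      _ = a ^ 2 * A - 2 * a * b * J + b ^ 2 * C := by
          rw [intervalIntegral.integral_add ((hisin2.const_mul _).sub (hisc.const_mul _))
            (hicos2.const_mul _),
            intervalIntegral.integral_sub (hisin2.const_mul _) (hisc.const_mul _),
            intervalIntegral.integral_const_mul, intervalIntegral.integral_const_mul,
            intervalIntegral.integral_const_mul]
  -- positivity of the quadratic form
  have hQpos : ∀ a b : ℝ, ¬(a = 0 ∧ b = 0) →
      0 < a ^ 2 * A - 2 * a * b * J + b ^ 2 * C := by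
    intro a b hab
    rw [← hQ a b]
    -- find a point where the integrand is positive
    have huIcc : Set.uIcc s₁ s₂ ⊆ Set.Icc 0 L := Set.uIcc_subset_Icc hs₁ hs₂
    have hIVT := intermediate_value_uIcc (hθ.mono huIcc)
    have hmM : (θ s₁) ⊓ (θ s₂) < (θ s₁) ⊔ (θ s₂) := inf_lt_sup.mpr hne
    have hy : ∃ y ∈ Set.Icc ((θ s₁) ⊓ (θ s₂)) ((θ s₁) ⊔ (θ s₂)),
        a * Real.sin y - b * Real.cos y ≠ 0 := by
      by_contra h
      push_neg at h
      exact hab (aux_lin_zero a b hmM h)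
    obtain ⟨y, hy1, hy2⟩ := hy
    have : y ∈ θ '' (Set.uIcc s₁ s₂) := hIVT hy1
    obtain ⟨s₀, hs₀mem, hs₀eq⟩ := this
    have hs₀ : s₀ ∈ Set.Icc 0 L := huIcc hs₀mem
    have hfpos : 0 < (a * Real.sin (θ s₀) - b * Real.cos (θ s₀)) ^ 2 := by
      rw [hs₀eq]; exact sq_pos_of_ne_zero hy2
    have hcont : ContinuousOn (fun s => (a * Real.sin (θ s) - b * Real.cos (θ s)) ^ 2)
        (Set.Icc 0 L) :=
      ((continuousOn_const.mul hsin).sub (continuousOn_const.mul hcos)).pow 2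
    exact aux_integral_pos hL hcont (fun s => sq_nonneg _) hs₀ hfpos
  -- conclude
  have hApos : 0 < A := by
    have h := hQpos 1 0 (by simp)
    nlinarith [h]
  have h2 := hQpos J A (fun h => hApos.ne' h.2)
  have hdetpos : 0 < A * C - J ^ 2 := by nlinarith [h2, hApos]
  have hdet : (PiMat L θ).det = A * C - J ^ 2 := by
    simp only [PiMat, Matrix.det_fin_two_of]
    rw [← hA, ← hC, ← hJ]
    ring
  refine ⟨hdet ▸ hdetpos, (Matrix.isUnit_iff_isUnit_det _).mpr ?_⟩
  exact isUnit_iff_ne_zero.mpr (by rw [hdet]; exact hdetpos.ne')
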